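/- Let $\Omega \subset \mathbb{R}^d$ ($d \in \{1,2,3\}$) be compact and $f : \Omega \times \mathbb{R}^3 \to [0,\infty)$ with $f \in L^2(\Omega\times\mathbb{R}^3)$ and $\int_{\mathbb{R}^3} f(\cdot,v)(1+|v|^2)\,dv \in L^2(\Omega)$. Suppose for every compact $C \subset \mathbb{R}^3$ and every $\delta > 0$ there exists a function $f_\theta \in L^2(\Omega \times C)$ with $\|f - f_\theta\|_{L^2(\Omega\times C)} < \delta$ (extended by zero outside $C$). Then for every $\epsilon > 0$ there exists such an approximant $f_\theta$ (supported in some $\Omega \times C$) with both $\|f - f_\theta\|_{L^2(\Omega\times\mathbb{R}^3)} < \epsilon$ and $\left\|\int_{\mathbb{R}^3}(f - f_\theta)(\cdot,v)(1+|v|^2)\,dv\right\|_{L^2(\Omega)} < \epsilon$. -/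

import Mathlib

open MeasureTheory ENNReal Filter Set Topology

private lemma eLpNorm_two_eq {α : Type*} {m0 : MeasurableSpace α} (m : Measure α) (g : α → ℝ) :
    eLpNorm g 2 m = (∫⁻ a, (‖g a‖₊ : ℝ≥0∞) ^ (2:ℝ) ∂m) ^ (1/2 : ℝ) := by
  rw [eLpNorm_eq_lintegral_rpow_enorm_toReal (by norm_num) (by norm_num)]
  norm_num
  rfl

private lemma lintegral_sq_eq {α : Type*} {m0 : MeasurableSpace α} (m : Measure α) (g : α → ℝ) :
    (∫⁻ a, (‖g a‖₊ : ℝ≥0∞) ^ (2:ℝ) ∂m) = (eLpNorm g 2 m) ^ (2:ℝ) := by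
  rw [eLpNorm_two_eq, ← ENNReal.rpow_mul]
  norm_num

private lemma eLpNorm_lt_of_lintegral {α : Type*} {m0 : MeasurableSpace α} {m : Measure α}
    {g : α → ℝ} {c : ℝ}
    (h : (∫⁻ a, (‖g a‖₊ : ℝ≥0∞) ^ (2:ℝ) ∂m) < (ENNReal.ofReal c) ^ (2:ℝ)) :
    eLpNorm g 2 m < ENNReal.ofReal c := by
  rw [eLpNorm_two_eq]
  calc (∫⁻ a, (‖g a‖₊ : ℝ≥0∞) ^ (2:ℝ) ∂m) ^ (1/2:ℝ)
      < ((ENNReal.ofReal c) ^ (2:ℝ)) ^ (1/2:ℝ) := ENNReal.rpow_lt_rpow h (by norm_num)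
    _ = ENNReal.ofReal c := by rw [← ENNReal.rpow_mul]; norm_num

private lemma sq_nnnorm_mono {a b : ℝ} (ha : 0 ≤ a) (hab : a ≤ b) :
    (‖a‖₊ : ℝ≥0∞) ^ (2:ℝ) ≤ (‖b‖₊ : ℝ≥0∞) ^ (2:ℝ) := by
  have h : ‖a‖ ≤ ‖b‖ := by
    rw [Real.norm_of_nonneg ha, Real.norm_of_nonneg (ha.trans hab)]; exact hab
  exact ENNReal.rpow_le_rpow (by exact_mod_cast h) (by norm_num)

set_option maxHeartbeats 4000000 in
/-- Universal approximation theorem for particle density functions (Theorem 3.2):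
simultaneous L² approximation on the full velocity domain and of the weighted
velocity moments, given density of approximants on compact velocity truncations. -/
theorem uat_particle_density (d : ℕ) (hd : d ∈ ({1, 2, 3} : Set ℕ))
    (Ω : Set (EuclideanSpace ℝ (Fin d))) (hΩ : IsCompact Ω)
    (f : EuclideanSpace ℝ (Fin d) × EuclideanSpace ℝ (Fin 3) → ℝ)
    (hfnonneg : ∀ x v, 0 ≤ f (x, v))
    (hfL2 : MemLp f 2 ((volume.restrict Ω).prod volume))
    (hint : ∀ x, Integrable (fun v => f (x, v) * (1 + ‖v‖ ^ 2)))
    (hM : MemLp (fun x => ∫ v, f (x, v) * (1 + ‖v‖ ^ 2)) 2 (volume.restrict Ω))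
    (happrox : ∀ C : Set (EuclideanSpace ℝ (Fin 3)), IsCompact C → ∀ δ > (0 : ℝ),
      ∃ fθ : EuclideanSpace ℝ (Fin d) × EuclideanSpace ℝ (Fin 3) → ℝ,
        (∀ x v, v ∉ C → fθ (x, v) = 0) ∧
        MemLp fθ 2 ((volume.restrict Ω).prod (volume.restrict C)) ∧
        eLpNorm (fun p => f p - fθ p) 2 ((volume.restrict Ω).prod (volume.restrict C)) <
          ENNReal.ofReal δ) :
    ∀ ε > (0 : ℝ),
      ∃ (C : Set (EuclideanSpace ℝ (Fin 3)))
        (fθ : EuclideanSpace ℝ (Fin d) × EuclideanSpace ℝ (Fin 3) → ℝ),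
        IsCompact C ∧ (∀ x v, v ∉ C → fθ (x, v) = 0) ∧
        eLpNorm (fun p => f p - fθ p) 2 ((volume.restrict Ω).prod volume) <
          ENNReal.ofReal ε ∧
        eLpNorm (fun x => ∫ v, (f (x, v) - fθ (x, v)) * (1 + ‖v‖ ^ 2)) 2
          (volume.restrict Ω) < ENNReal.ofReal ε := by
  intro ε hε
  classical
  set μ : Measure (EuclideanSpace ℝ (Fin d)) := volume.restrict Ω with hμdef
  set ν : Measure (EuclideanSpace ℝ (Fin 3)) := volume with hνdef
  haveI : IsFiniteMeasure μ :=
    ⟨by rw [hμdef, Measure.restrict_apply_univ]; exact hΩ.measure_lt_top⟩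
  have hfm : AEStronglyMeasurable f (μ.prod ν) := hfL2.1
  have hcont : Continuous fun v : EuclideanSpace ℝ (Fin 3) => 1 + ‖v‖ ^ 2 := by continuity
  -- truncation balls
  set B : ℕ → Set (EuclideanSpace ℝ (Fin 3)) := fun n => Metric.closedBall 0 n with hBdef
  have hBmeas : ∀ n, MeasurableSet (B n) := fun n => measurableSet_closedBall
  have hmemB : ∀ (v : EuclideanSpace ℝ (Fin 3)) (n : ℕ), ‖v‖ ≤ n → v ∈ B n := fun v n h => by
    simpa [hBdef, Metric.mem_closedBall, dist_zero_right] using h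
  set ψ : ℕ → EuclideanSpace ℝ (Fin 3) → ℝ :=
    fun n => (B n).indicator (fun v => 1 + ‖v‖ ^ 2) with hψdef
  set φ : ℕ → EuclideanSpace ℝ (Fin 3) → ℝ :=
    fun n => (B n)ᶜ.indicator (fun v => 1 + ‖v‖ ^ 2) with hφdef
  have hψm : ∀ n, Measurable (ψ n) := fun n => hcont.measurable.indicator (hBmeas n)
  have hφm : ∀ n, Measurable (φ n) := fun n => hcont.measurable.indicator (hBmeas n).compl
  have hψ_nonneg : ∀ n v, 0 ≤ ψ n v := fun n v =>
    Set.indicator_nonneg (fun v _ => by positivity) v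
  have hφ_nonneg : ∀ n v, 0 ≤ φ n v := fun n v =>
    Set.indicator_nonneg (fun v _ => by positivity) v
  have hφ_le : ∀ n v, φ n v ≤ 1 + ‖v‖ ^ 2 := fun n v =>
    Set.indicator_le_self' (fun v _ => by positivity) v
  have hφψ : ∀ n v, φ n v + ψ n v = 1 + ‖v‖ ^ 2 := fun n v => by
    by_cases h : v ∈ B n <;> simp [hφdef, hψdef, Set.indicator_apply, h]
  -- tail 1 : the L² tail of f in velocity
  have hSmeas : ∀ n, MeasurableSet (Prod.snd ⁻¹' (B n) :
      Set (EuclideanSpace ℝ (Fin d) × EuclideanSpace ℝ (Fin 3))) := fun n =>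
    measurable_snd (hBmeas n)
  have hFmeas_base : AEMeasurable (fun p => (‖f p‖₊ : ℝ≥0∞) ^ (2:ℝ)) (μ.prod ν) :=
    ENNReal.continuous_rpow_const.measurable.comp_aemeasurable hfm.enorm
  have hffin : (∫⁻ p, (‖f p‖₊ : ℝ≥0∞) ^ (2:ℝ) ∂(μ.prod ν)) ≠ ∞ := by
    rw [lintegral_sq_eq]
    exact (ENNReal.rpow_lt_top_of_nonneg (by norm_num) hfL2.2.ne).ne
  set F : ℕ → EuclideanSpace ℝ (Fin d) × EuclideanSpace ℝ (Fin 3) → ℝ≥0∞ :=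
    fun n => ((Prod.snd ⁻¹' (B n))ᶜ).indicator (fun p => (‖f p‖₊ : ℝ≥0∞) ^ (2:ℝ)) with hFdef
  have htend1 : Tendsto (fun n => ∫⁻ p, F n p ∂(μ.prod ν)) atTop (𝓝 0) := by
    have := tendsto_lintegral_of_dominated_convergence' (μ := μ.prod ν)
      (F := F) (f := fun _ => 0) (fun p => (‖f p‖₊ : ℝ≥0∞) ^ (2:ℝ))
      (fun n => hFmeas_base.indicator (hSmeas n).compl)
      (fun n => Eventually.of_forall fun p => Set.indicator_le_self _ _ p)
      hffin
      (Eventually.of_forall fun p => by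
        have hev : ∀ᶠ n : ℕ in atTop, F n p = 0 := by
          refine eventually_atTop.2 ⟨⌈‖p.2‖⌉₊, fun n hn => Set.indicator_of_notMem ?_ _⟩
          simp only [Set.mem_compl_iff, Set.mem_preimage, not_not]
          exact hmemB _ n ((Nat.le_ceil _).trans (Nat.cast_le.2 hn))
        exact tendsto_const_nhds.congr' (hev.mono fun n h => h.symm))
    simpa using this
  -- tail 2 : moment tail
  set Mt : ℕ → EuclideanSpace ℝ (Fin d) → ℝ :=
    fun n x => ∫ v, f (x, v) * φ n v ∂ν with hMtdef
  have hre : ∀ n x, (fun v => f (x, v) * φ n v)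
      = (B n)ᶜ.indicator (fun v => f (x, v) * (1 + ‖v‖ ^ 2)) := by
    intro n x; funext v
    by_cases h : v ∈ B n <;> simp [hφdef, Set.indicator_apply, h]
  have hre' : ∀ n x, (fun v => f (x, v) * ψ n v)
      = (B n).indicator (fun v => f (x, v) * (1 + ‖v‖ ^ 2)) := by
    intro n x; funext v
    by_cases h : v ∈ B n <;> simp [hψdef, Set.indicator_apply, h]
  have hMti : ∀ n x, Integrable (fun v => f (x, v) * φ n v) ν := fun n x => by
    rw [hre]; exact (hint x).indicator (hBmeas n).compl
  have hMti' : ∀ n x, Integrable (fun v => f (x, v) * ψ n v) ν := fun n x => by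
    rw [hre']; exact (hint x).indicator (hBmeas n)
  have hMt_nonneg : ∀ n x, 0 ≤ Mt n x := fun n x =>
    integral_nonneg fun v => mul_nonneg (hfnonneg x v) (hφ_nonneg n v)
  have hMt_le : ∀ n x, Mt n x ≤ ∫ v, f (x, v) * (1 + ‖v‖ ^ 2) ∂ν := fun n x =>
    integral_mono (hMti n x) (hint x) fun v =>
      mul_le_mul_of_nonneg_left (hφ_le n v) (hfnonneg x v)
  have hM_nonneg : ∀ x, 0 ≤ ∫ v, f (x, v) * (1 + ‖v‖ ^ 2) ∂ν := fun x =>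
    integral_nonneg fun v => mul_nonneg (hfnonneg x v) (by positivity)
  have hMt_tendsto : ∀ x, Tendsto (fun n => Mt n x) atTop (𝓝 0) := by
    intro x
    have := tendsto_integral_of_dominated_convergence (μ := ν)
      (F := fun n v => f (x, v) * φ n v) (f := fun _ => 0)
      (bound := fun v => f (x, v) * (1 + ‖v‖ ^ 2))
      (fun n => (hMti n x).1) (hint x)
      (fun n => Eventually.of_forall fun v => by
        rw [Real.norm_of_nonneg (mul_nonneg (hfnonneg x v) (hφ_nonneg n v))]
        exact mul_le_mul_of_nonneg_left (hφ_le n v) (hfnonneg x v))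
      (Eventually.of_forall fun v => by
        have hev : ∀ᶠ n : ℕ in atTop, f (x, v) * φ n v = 0 := by
          refine eventually_atTop.2 ⟨⌈‖v‖⌉₊, fun n hn => ?_⟩
          have hv : v ∈ B n := hmemB v n ((Nat.le_ceil _).trans (Nat.cast_le.2 hn))
          simp [hφdef, Set.indicator_apply, hv]
        exact tendsto_const_nhds.congr' (hev.mono fun n h => h.symm))
    simpa using this
  have hMtm : ∀ n, AEStronglyMeasurable (Mt n) μ := fun n =>
    (hfm.mul ((hφm n).comp measurable_snd).aestronglyMeasurable).integral_prod_right'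
  have hMfin : (∫⁻ x, (‖∫ v, f (x, v) * (1 + ‖v‖ ^ 2) ∂ν‖₊ : ℝ≥0∞) ^ (2:ℝ) ∂μ) ≠ ∞ := by
    rw [lintegral_sq_eq]
    exact (ENNReal.rpow_lt_top_of_nonneg (by norm_num) hM.2.ne).ne
  have htend2 : Tendsto (fun n => ∫⁻ x, (‖Mt n x‖₊ : ℝ≥0∞) ^ (2:ℝ) ∂μ) atTop (𝓝 0) := by
    have := tendsto_lintegral_of_dominated_convergence' (μ := μ)
      (F := fun n x => (‖Mt n x‖₊ : ℝ≥0∞) ^ (2:ℝ)) (f := fun _ => 0)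
      (fun x => (‖∫ v, f (x, v) * (1 + ‖v‖ ^ 2) ∂ν‖₊ : ℝ≥0∞) ^ (2:ℝ))
      (fun n => ENNReal.continuous_rpow_const.measurable.comp_aemeasurable (hMtm n).enorm)
      (fun n => Eventually.of_forall fun x => sq_nnnorm_mono (hMt_nonneg n x) (hMt_le n x))
      hMfin
      (Eventually.of_forall fun x => by
        have h1 : Tendsto (fun n => (‖Mt n x‖₊ : ℝ≥0∞)) atTop (𝓝 0) := by
          have := ENNReal.tendsto_coe.2 (hMt_tendsto x).nnnorm
          simpa using this
        have h2 := (ENNReal.continuous_rpow_const (y := (2:ℝ))).tendsto (0:ℝ≥0∞)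
        have := h2.comp h1
        simpa [Function.comp_def, ENNReal.zero_rpow_of_pos (by norm_num : (0:ℝ) < 2)] using this)
    simpa using this
  -- choose n
  have ht : (0:ℝ≥0∞) < (ENNReal.ofReal (ε/2)) ^ (2:ℝ) :=
    ENNReal.rpow_pos (ENNReal.ofReal_pos.2 (half_pos hε)) ENNReal.ofReal_ne_top
  obtain ⟨n, hn1, hn2⟩ :=
    ((htend1.eventually (gt_mem_nhds ht)).and (htend2.eventually (gt_mem_nhds ht))).exists
  have hCcomp : IsCompact (B n) := isCompact_closedBall _ _
  -- constants
  set K2 : ℝ≥0∞ := ∫⁻ v, (‖ψ n v‖₊ : ℝ≥0∞) ^ (2:ℝ) ∂ν with hK2def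
  have hK2fin : K2 < ∞ := by
    have hpt : ∀ v, (‖ψ n v‖₊ : ℝ≥0∞) ^ (2:ℝ)
        = (B n).indicator (fun v => (‖(1 + ‖v‖ ^ 2 : ℝ)‖₊ : ℝ≥0∞) ^ (2:ℝ)) v := by
      intro v
      by_cases h : v ∈ B n <;>
        simp [hψdef, Set.indicator_apply, h,
          ENNReal.zero_rpow_of_pos (by norm_num : (0:ℝ) < 2)]
    rw [hK2def, lintegral_congr hpt, lintegral_indicator (hBmeas n) _]
    calc ∫⁻ v in B n, (‖(1 + ‖v‖ ^ 2 : ℝ)‖₊ : ℝ≥0∞) ^ (2:ℝ) ∂ν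
        ≤ ∫⁻ _ in B n, (‖(1 + (n:ℝ) ^ 2 : ℝ)‖₊ : ℝ≥0∞) ^ (2:ℝ) ∂ν := by
          refine setLIntegral_mono measurable_const fun v hv => ?_
          have hvn : ‖v‖ ≤ (n:ℝ) := by
            simpa [hBdef, Metric.mem_closedBall, dist_zero_right] using hv
          exact sq_nnnorm_mono (by positivity)
            (by nlinarith [norm_nonneg v])
      _ = (‖(1 + (n:ℝ) ^ 2 : ℝ)‖₊ : ℝ≥0∞) ^ (2:ℝ) * ν (B n) := setLIntegral_const _ _
      _ < ∞ := ENNReal.mul_lt_top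
          (ENNReal.rpow_lt_top_of_nonneg (by norm_num) ENNReal.coe_ne_top)
          hCcomp.measure_lt_top
  set Kr : ℝ := (K2 ^ (1/2:ℝ)).toReal with hKrdef
  have hKr0 : 0 ≤ Kr := ENNReal.toReal_nonneg
  have hKofReal : K2 ^ (1/2:ℝ) = ENNReal.ofReal Kr :=
    (ENNReal.ofReal_toReal (ENNReal.rpow_lt_top_of_nonneg (by norm_num) hK2fin.ne).ne).symm
  set δ : ℝ := (ε/2) / (Kr + 1) with hδdef
  have hδ : 0 < δ := div_pos (half_pos hε) (by positivity)
  have hδle : δ ≤ ε/2 := by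
    rw [hδdef]
    exact div_le_self (half_pos hε).le (by linarith)
  obtain ⟨fθ, hsupp, hθL2, hθclose⟩ := happrox (B n) hCcomp δ hδ
  -- relating the restricted product measure to a restriction of the product measure
  have hπC : μ.prod (ν.restrict (B n)) = (μ.prod ν).restrict (Prod.snd ⁻¹' (B n)) := by
    have h1 := Measure.prod_restrict (μ := μ) (ν := ν) Set.univ (B n)
    rw [Measure.restrict_univ] at h1
    rw [h1]
    congr 1
    ext p
    simp [Set.mem_prod]
  have hθind : (Prod.snd ⁻¹' (B n)).indicator fθ = fθ := by
    funext p
    by_cases h : p.2 ∈ B n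
    · simp [Set.indicator_apply, h]
    · simp only [Set.indicator_apply, Set.mem_preimage, h, if_false]
      exact (hsupp p.1 p.2 h).symm
  have hθm : AEStronglyMeasurable fθ (μ.prod ν) := by
    rw [← hθind]
    exact (aestronglyMeasurable_indicator_iff (hSmeas n)).2 (by rw [← hπC]; exact hθL2.1)
  have hsub : AEStronglyMeasurable (fun p => f p - fθ p) (μ.prod ν) := hfm.sub hθm
  have hθ2π : eLpNorm fθ 2 (μ.prod ν) = eLpNorm fθ 2 (μ.prod (ν.restrict (B n))) := by
    rw [hπC, ← eLpNorm_indicator_eq_eLpNorm_restrict (hSmeas n), hθind]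
  refine ⟨B n, fθ, hCcomp, hsupp, ?_, ?_⟩
  · -- first estimate
    have hdecomp : (fun p => f p - fθ p)
        = (Prod.snd ⁻¹' (B n)).indicator (fun q => f q - fθ q)
          + (Prod.snd ⁻¹' (B n))ᶜ.indicator f := by
      funext p
      simp only [Pi.add_apply, Set.indicator_apply, Set.mem_compl_iff, Set.mem_preimage]
      by_cases h : p.2 ∈ B n
      · simp [h]
      · simp only [h, if_false, if_true, not_false_iff]
        rw [show fθ p = 0 from hsupp p.1 p.2 h]
        ring
    rw [hdecomp]
    calc eLpNorm ((Prod.snd ⁻¹' (B n)).indicator (fun q => f q - fθ q)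
            + (Prod.snd ⁻¹' (B n))ᶜ.indicator f) 2 (μ.prod ν)
        ≤ eLpNorm ((Prod.snd ⁻¹' (B n)).indicator (fun q => f q - fθ q)) 2 (μ.prod ν)
          + eLpNorm ((Prod.snd ⁻¹' (B n))ᶜ.indicator f) 2 (μ.prod ν) :=
          eLpNorm_add_le (hsub.indicator (hSmeas n)) (hfm.indicator (hSmeas n).compl) one_le_two
      _ < ENNReal.ofReal (ε/2) + ENNReal.ofReal (ε/2) := by
          refine ENNReal.add_lt_add ?_ ?_
          · rw [eLpNorm_indicator_eq_eLpNorm_restrict (hSmeas n), ← hπC]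
            exact lt_of_lt_of_le hθclose (ENNReal.ofReal_le_ofReal hδle)
          · refine eLpNorm_lt_of_lintegral ?_
            have hpt : ∀ p, (‖(Prod.snd ⁻¹' (B n))ᶜ.indicator f p‖₊ : ℝ≥0∞) ^ (2:ℝ) = F n p := by
              intro p
              by_cases h : p.2 ∈ B n <;>
                simp [hFdef, Set.indicator_apply, h,
                  ENNReal.zero_rpow_of_pos (by norm_num : (0:ℝ) < 2)]
            rw [lintegral_congr hpt]
            exact hn1
      _ = ENNReal.ofReal ε := by
          rw [← ENNReal.ofReal_add (by positivity) (by positivity), add_halves]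
  · -- second estimate
    have hψsnd : AEStronglyMeasurable
        (fun p : EuclideanSpace ℝ (Fin d) × EuclideanSpace ℝ (Fin 3) => ψ n p.2) (μ.prod ν) :=
      ((hψm n).comp measurable_snd).aestronglyMeasurable
    have hψπ : MemLp (fun p : EuclideanSpace ℝ (Fin d) × EuclideanSpace ℝ (Fin 3) => ψ n p.2)
        2 (μ.prod ν) := by
      refine ⟨hψsnd, ?_⟩
      rw [eLpNorm_two_eq]
      have hm1 : AEMeasurable
          (fun p : EuclideanSpace ℝ (Fin d) × EuclideanSpace ℝ (Fin 3) =>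
            (‖ψ n p.2‖₊ : ℝ≥0∞) ^ (2:ℝ)) (μ.prod ν) :=
        ENNReal.continuous_rpow_const.measurable.comp_aemeasurable
          (((hψm n).comp measurable_snd).enorm.aemeasurable)
      have hprodint : (∫⁻ p, (‖ψ n p.2‖₊ : ℝ≥0∞) ^ (2:ℝ) ∂(μ.prod ν)) = ∫⁻ _, K2 ∂μ := by
        rw [lintegral_prod _ hm1]
      rw [hprodint, lintegral_const]
      exact ENNReal.rpow_lt_top_of_nonneg (by norm_num)
        (ENNReal.mul_ne_top hK2fin.ne (measure_ne_top μ _))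
    have hθπ : MemLp fθ 2 (μ.prod ν) := ⟨hθm, by rw [hθ2π]; exact hθL2.2⟩
    have hmulint : Integrable
        (fun p : EuclideanSpace ℝ (Fin d) × EuclideanSpace ℝ (Fin 3) => fθ p * ψ n p.2)
        (μ.prod ν) := by
      refine ⟨hθm.mul hψsnd, ?_⟩
      have hCS := ENNReal.lintegral_mul_le_Lp_mul_Lq (μ.prod ν)
        Real.HolderConjugate.two_two
        hθm.enorm (((hψm n).comp measurable_snd).enorm.aemeasurable)
      show (∫⁻ p, (‖fθ p * ψ n p.2‖₊ : ℝ≥0∞) ∂(μ.prod ν)) < ∞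
      calc (∫⁻ p, (‖fθ p * ψ n p.2‖₊ : ℝ≥0∞) ∂(μ.prod ν))
          = ∫⁻ p, (‖fθ p‖₊ : ℝ≥0∞) * (‖ψ n p.2‖₊ : ℝ≥0∞) ∂(μ.prod ν) :=
            lintegral_congr fun p => by rw [nnnorm_mul, ENNReal.coe_mul]
        _ ≤ (∫⁻ p, (‖fθ p‖₊ : ℝ≥0∞) ^ (2:ℝ) ∂(μ.prod ν)) ^ (1/2:ℝ)
            * (∫⁻ p, (‖ψ n p.2‖₊ : ℝ≥0∞) ^ (2:ℝ) ∂(μ.prod ν)) ^ (1/2:ℝ) := hCS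
        _ < ∞ := by
            apply ENNReal.mul_lt_top
            · rw [lintegral_sq_eq]
              exact ENNReal.rpow_lt_top_of_nonneg (by norm_num)
                (ENNReal.rpow_lt_top_of_nonneg (by norm_num) hθπ.2.ne).ne
            · rw [lintegral_sq_eq]
              exact ENNReal.rpow_lt_top_of_nonneg (by norm_num)
                (ENNReal.rpow_lt_top_of_nonneg (by norm_num) hψπ.2.ne).ne
    have hint2 : ∀ᵐ x ∂μ, Integrable (fun v => fθ (x, v) * ψ n v) ν := hmulint.prod_right_ae
    have hsec : ∀ᵐ x ∂μ, AEStronglyMeasurable (fun v => f (x, v) - fθ (x, v)) ν :=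
      hsub.prodMk_left
    set h : EuclideanSpace ℝ (Fin d) → ℝ :=
      fun x => ∫ v, (f (x, v) - fθ (x, v)) * ψ n v ∂ν with hhdef
    have hhm : AEStronglyMeasurable h μ := (hsub.mul hψsnd).integral_prod_right'
    have heq : (fun x => ∫ v, (f (x, v) - fθ (x, v)) * (1 + ‖v‖ ^ 2) ∂ν)
        =ᵐ[μ] Mt n + h := by
      filter_upwards [hint2] with x hx
      have e2 : (fun v => fθ (x, v) * (1 + ‖v‖ ^ 2)) = fun v => fθ (x, v) * ψ n v := by
        funext v
        by_cases hv : v ∈ B n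
        · simp [hψdef, Set.indicator_apply, hv]
        · rw [show fθ (x, v) = 0 from hsupp x v hv]; ring
      have i1 : Integrable (fun v => f (x, v) * (1 + ‖v‖ ^ 2)) ν := hint x
      have i2 : Integrable (fun v => fθ (x, v) * (1 + ‖v‖ ^ 2)) ν := by rw [e2]; exact hx
      have i3 := hMti n x
      have i4 := hMti' n x
      have split1 : (∫ v, (f (x, v) - fθ (x, v)) * (1 + ‖v‖ ^ 2) ∂ν)
          = (∫ v, f (x, v) * (1 + ‖v‖ ^ 2) ∂ν) - ∫ v, fθ (x, v) * (1 + ‖v‖ ^ 2) ∂ν := by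
        simp_rw [sub_mul]
        exact integral_sub i1 i2
      have split2 : (∫ v, f (x, v) * (1 + ‖v‖ ^ 2) ∂ν)
          = (∫ v, f (x, v) * φ n v ∂ν) + ∫ v, f (x, v) * ψ n v ∂ν := by
        rw [← integral_add i3 i4]
        congr 1; funext v; rw [← mul_add, hφψ n v]
      have split3 : (∫ v, (f (x, v) - fθ (x, v)) * ψ n v ∂ν)
          = (∫ v, f (x, v) * ψ n v ∂ν) - ∫ v, fθ (x, v) * ψ n v ∂ν := by
        simp_rw [sub_mul]
        exact integral_sub i4 hx
      have hMtx : Mt n x = ∫ v, f (x, v) * φ n v ∂ν := rfl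
      have hhx : h x = ∫ v, (f (x, v) - fθ (x, v)) * ψ n v ∂ν := rfl
      simp only [Pi.add_apply]
      rw [hMtx, hhx, split1, split2, e2, split3]
      ring
    rw [eLpNorm_congr_ae heq]
    have hMtA : eLpNorm (Mt n) 2 μ < ENNReal.ofReal (ε/2) := eLpNorm_lt_of_lintegral hn2
    have hhbound : eLpNorm h 2 μ < ENNReal.ofReal (ε/2) := by
      have hcore : ∀ᵐ x ∂μ, (‖h x‖₊ : ℝ≥0∞) ^ (2:ℝ)
          ≤ K2 * ∫⁻ v in B n, (‖f (x, v) - fθ (x, v)‖₊ : ℝ≥0∞) ^ (2:ℝ) ∂ν := by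
        filter_upwards [hsec] with x hx
        set a : EuclideanSpace ℝ (Fin 3) → ℝ≥0∞ :=
          fun v => (B n).indicator (fun _ => (1:ℝ≥0∞)) v * (‖f (x, v) - fθ (x, v)‖₊ : ℝ≥0∞)
          with hadef
        have ha : AEMeasurable a ν :=
          ((measurable_const.indicator (hBmeas n)).aemeasurable.mul hx.enorm)
        have hb : AEMeasurable (fun v => (‖ψ n v‖₊ : ℝ≥0∞)) ν := (hψm n).enorm.aemeasurable
        have hab : ∀ v, (‖(f (x, v) - fθ (x, v)) * ψ n v‖₊ : ℝ≥0∞)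
            = a v * (‖ψ n v‖₊ : ℝ≥0∞) := by
          intro v
          by_cases hv : v ∈ B n
          · simp [hadef, Set.indicator_apply, hv, nnnorm_mul, ENNReal.coe_mul]
          · simp [hadef, hψdef, Set.indicator_apply, hv]
        have hCS := ENNReal.lintegral_mul_le_Lp_mul_Lq ν
          Real.HolderConjugate.two_two ha hb
        calc (‖h x‖₊ : ℝ≥0∞) ^ (2:ℝ)
            ≤ (∫⁻ v, (‖(f (x, v) - fθ (x, v)) * ψ n v‖₊ : ℝ≥0∞) ∂ν) ^ (2:ℝ) :=
              ENNReal.rpow_le_rpow (enorm_integral_le_lintegral_enorm _) (by norm_num)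
          _ = (∫⁻ v, a v * (‖ψ n v‖₊ : ℝ≥0∞) ∂ν) ^ (2:ℝ) := by rw [lintegral_congr hab]
          _ ≤ ((∫⁻ v, a v ^ (2:ℝ) ∂ν) ^ (1/2:ℝ)
              * (∫⁻ v, (‖ψ n v‖₊ : ℝ≥0∞) ^ (2:ℝ) ∂ν) ^ (1/2:ℝ)) ^ (2:ℝ) :=
              ENNReal.rpow_le_rpow hCS (by norm_num)
          _ = (∫⁻ v, a v ^ (2:ℝ) ∂ν) * K2 := by
              rw [ENNReal.mul_rpow_of_nonneg _ _ (by norm_num : (0:ℝ) ≤ 2),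
                ← ENNReal.rpow_mul, ← ENNReal.rpow_mul,
                show ((1:ℝ)/2*2 : ℝ) = 1 by norm_num, ENNReal.rpow_one, ENNReal.rpow_one,
                hK2def]
          _ = K2 * ∫⁻ v in B n, (‖f (x, v) - fθ (x, v)‖₊ : ℝ≥0∞) ^ (2:ℝ) ∂ν := by
              rw [mul_comm]
              congr 1
              have hpt : ∀ v, a v ^ (2:ℝ)
                  = (B n).indicator
                      (fun v => (‖f (x, v) - fθ (x, v)‖₊ : ℝ≥0∞) ^ (2:ℝ)) v := by
                intro v
                by_cases hv : v ∈ B n <;>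
                  simp [hadef, Set.indicator_apply, hv,
                    ENNReal.zero_rpow_of_pos (by norm_num : (0:ℝ) < 2)]
              rw [lintegral_congr hpt, lintegral_indicator (hBmeas n) _]
      have hmeasr : AEMeasurable (fun p => (‖f p - fθ p‖₊ : ℝ≥0∞) ^ (2:ℝ))
          (μ.prod (ν.restrict (B n))) := by
        rw [hπC]
        exact (ENNReal.continuous_rpow_const.measurable.comp_aemeasurable hsub.enorm).restrict
      have hJ : (∫⁻ x, (‖h x‖₊ : ℝ≥0∞) ^ (2:ℝ) ∂μ) ≤ K2 * (ENNReal.ofReal δ) ^ (2:ℝ) := by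
        calc (∫⁻ x, (‖h x‖₊ : ℝ≥0∞) ^ (2:ℝ) ∂μ)
            ≤ ∫⁻ x, K2 * ∫⁻ v in B n, (‖f (x, v) - fθ (x, v)‖₊ : ℝ≥0∞) ^ (2:ℝ) ∂ν ∂μ :=
              lintegral_mono_ae hcore
          _ = K2 * ∫⁻ x, ∫⁻ v in B n, (‖f (x, v) - fθ (x, v)‖₊ : ℝ≥0∞) ^ (2:ℝ) ∂ν ∂μ :=
              lintegral_const_mul' _ _ hK2fin.ne
          _ = K2 * ∫⁻ p, (‖f p - fθ p‖₊ : ℝ≥0∞) ^ (2:ℝ) ∂(μ.prod (ν.restrict (B n))) := by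
              congr 1
              exact (lintegral_prod _ hmeasr).symm
          _ ≤ K2 * (ENNReal.ofReal δ) ^ (2:ℝ) := by
              refine mul_le_mul_right ?_ _
              rw [lintegral_sq_eq]
              exact ENNReal.rpow_le_rpow hθclose.le (by norm_num)
      rw [eLpNorm_two_eq]
      calc (∫⁻ x, (‖h x‖₊ : ℝ≥0∞) ^ (2:ℝ) ∂μ) ^ (1/2:ℝ)
          ≤ (K2 * (ENNReal.ofReal δ) ^ (2:ℝ)) ^ (1/2:ℝ) :=
            ENNReal.rpow_le_rpow hJ (by norm_num)
        _ = K2 ^ (1/2:ℝ) * ENNReal.ofReal δ := by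
            rw [ENNReal.mul_rpow_of_nonneg _ _ (by norm_num : (0:ℝ) ≤ 1/2),
              ← ENNReal.rpow_mul]
            norm_num
        _ = ENNReal.ofReal (Kr * δ) := by
            rw [hKofReal, ← ENNReal.ofReal_mul hKr0]
        _ < ENNReal.ofReal (ε/2) := by
            refine (ENNReal.ofReal_lt_ofReal_iff (half_pos hε)).2 ?_
            have : Kr * δ = (ε/2) * (Kr / (Kr + 1)) := by rw [hδdef]; ring
            rw [this]
            calc (ε/2) * (Kr / (Kr + 1)) < (ε/2) * 1 :=
                  mul_lt_mul_of_pos_left ((div_lt_one (by positivity)).2 (by linarith))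
                    (half_pos hε)
              _ = ε/2 := mul_one _
    calc eLpNorm (Mt n + h) 2 μ
        ≤ eLpNorm (Mt n) 2 μ + eLpNorm h 2 μ := eLpNorm_add_le (hMtm n) hhm one_le_two
      _ < ENNReal.ofReal (ε/2) + ENNReal.ofReal (ε/2) := ENNReal.add_lt_add hMtA hhbound
      _ = ENNReal.ofReal ε := by
          rw [← ENNReal.ofReal_add (by positivity) (by positivity), add_halves]
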